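/- With the hypotheses of the four-term exact sequence 0 → M_1 → N → M → M_2 → 0 of finitely generated graded S-modules, dim M = dim N = m, d_1 = dim M_1, d_2 = dim M_2, D = max(d_1,d_2): for i = m - D, one has e_i(N) = e_i(M) + (-1)^i [D = d_1] e_0(M_1) − (-1)^i [D = d_2] e_0(M_2), where [P] is 1 if P holds and 0 otherwise. -/

import Mathlib

open MvPolynomial Finsupp Module

namespace Paper

variable {k : Type*} [Field k] {n : ℕ}

/-- `J` is a monomial ideal: generated by a set of monomials. -/
def IsMonomialIdeal (J : Ideal (MvPolynomial (Fin n) k)) : Prop :=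
  ∃ G : Set (Fin n →₀ ℕ),
    J = Ideal.span ((fun d => (monomial d (1:k) : MvPolynomial (Fin n) k)) '' G)

/-- The Borel-type condition: for `i < j` and a monomial `x^d ∈ J` with `x_j ∣ x^d`,
some `x_i^s · x^d / x_j` lies in `J`. -/
def BorelCond (J : Ideal (MvPolynomial (Fin n) k)) : Prop :=
  ∀ i j : Fin n, i < j → ∀ d : Fin n →₀ ℕ,
    (monomial d (1:k) : MvPolynomial (Fin n) k) ∈ J → d j ≠ 0 →
    ∃ s : ℕ,
      (monomial (d + Finsupp.single i s - Finsupp.single j 1) (1:k) :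
        MvPolynomial (Fin n) k) ∈ J

/-- `J` is a monomial ideal of Borel type. -/
def IsBorelType (J : Ideal (MvPolynomial (Fin n) k)) : Prop :=
  IsMonomialIdeal J ∧ BorelCond J

/-- The saturation `J : I^∞`. -/
noncomputable def sat (J I : Ideal (MvPolynomial (Fin n) k)) : Ideal (MvPolynomial (Fin n) k) :=
  ⨆ m : ℕ, Submodule.colon J ((I ^ m) : Ideal (MvPolynomial (Fin n) k))

/-- The product of the variables with (0-based) index `≥ r`, i.e. `x_{r+1} ⋯ x_n`. -/
noncomputable def tailProd (k : Type*) [Field k] (n r : ℕ) : MvPolynomial (Fin n) k :=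
  ∏ i ∈ Finset.univ.filter (fun i : Fin n => r ≤ (i : ℕ)), X i

/-- `Φ_r(J) = J : (x_{r+1} ⋯ x_n)^∞`. -/
noncomputable def Phi (r : ℕ) (J : Ideal (MvPolynomial (Fin n) k)) :
    Ideal (MvPolynomial (Fin n) k) :=
  sat J (Ideal.span {tailProd k n r})

/-- The projection `Π_r : k[x_1,…,x_n] → k[x_1,…,x_r]` sending `x_{r+1},…,x_n` to `0`. -/
noncomputable def projDown (k : Type*) [Field k] (n r : ℕ) :
    MvPolynomial (Fin n) k →ₐ[k] MvPolynomial (Fin r) k :=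
  aeval (fun i : Fin n => if h : (i : ℕ) < r then X ⟨i, h⟩ else 0)

/-- `Π_r(J)`, the image ideal of `J` in `k[x_1,…,x_r]`. -/
noncomputable def PiIdeal (r : ℕ) (J : Ideal (MvPolynomial (Fin n) k)) :
    Ideal (MvPolynomial (Fin r) k) :=
  J.map (projDown k n r).toRingHom

/-- The exponent `d` is a minimal generator of the monomial ideal `J`. -/
def IsMinGen (J : Ideal (MvPolynomial (Fin n) k)) (d : Fin n →₀ ℕ) : Prop :=
  (monomial d (1:k) : MvPolynomial (Fin n) k) ∈ J ∧
    ∀ d' : Fin n →₀ ℕ, d' ≤ d →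
      (monomial d' (1:k) : MvPolynomial (Fin n) k) ∈ J → d' = d

/-- The leading exponent of a polynomial with respect to a monomial order. -/
noncomputable def leadExp (m : MonomialOrder (Fin n)) (f : MvPolynomial (Fin n) k) :
    Fin n →₀ ℕ :=
  m.toSyn.symm (f.support.sup fun d => m.toSyn d)

/-- The initial ideal of `P` with respect to the monomial order `m`. -/
noncomputable def initialIdeal (m : MonomialOrder (Fin n)) (P : Ideal (MvPolynomial (Fin n) k)) :
    Ideal (MvPolynomial (Fin n) k) :=
  Ideal.span {g | ∃ f ∈ P, f ≠ 0 ∧ g = (monomial (leadExp m f) (1:k) : MvPolynomial (Fin n) k)}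

/-- A homogeneous ideal: closed under taking homogeneous components. -/
def IsHomogIdeal (P : Ideal (MvPolynomial (Fin n) k)) : Prop :=
  ∀ f ∈ P, ∀ i : ℕ, homogeneousComponent i f ∈ P

/-- The ideal generated by the variables `x_1, …, x_{i+1}` (0-based indices `≤ i`). -/
noncomputable def varIdealLe (k : Type*) [Field k] {n : ℕ} (i : Fin n) :
    Ideal (MvPolynomial (Fin n) k) :=
  Ideal.span ((fun j : Fin n => (X j : MvPolynomial (Fin n) k)) '' {j | j ≤ i})

/-- The Hilbert series of `S/I` as a power series with integer coefficients. -/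
noncomputable def hilb {N : ℕ} (I : Ideal (MvPolynomial (Fin N) k)) : PowerSeries ℤ :=
  PowerSeries.mk fun i =>
    (Module.finrank k (Submodule.map (Ideal.Quotient.mkₐ k I).toLinearMap
      (homogeneousSubmodule (Fin N) k i)) : ℤ)

/-- The `i`-th Hilbert coefficient read off from the numerator polynomial `q`:
the coefficient of `(t-1)^i` in `q`. -/
noncomputable def hc (q : Polynomial ℤ) (i : ℕ) : ℤ :=
  (Polynomial.taylor 1 q).coeff i

/-- The Krull dimension of the quotient ring `S/I`. -/
noncomputable def qdim {N : ℕ} (I : Ideal (MvPolynomial (Fin N) k)) : WithBot (WithTop ℕ) :=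
  ringKrullDim (MvPolynomial (Fin N) k ⧸ I)

/-- The embedding `k[x_1,…,x_r] → k[x_1,…,x_n]`. -/
noncomputable def inclUp (k : Type*) [Field k] {r n : ℕ} (h : r ≤ n) :
    MvPolynomial (Fin r) k →ₐ[k] MvPolynomial (Fin n) k :=
  rename (Fin.castLE h)

/-- The embedding of variables for the tail subring `k[x_{r+1},…,x_n]`. -/
def tailEmb (n r : ℕ) (h : r ≤ n) : Fin (n - r) → Fin n :=
  fun j => ⟨r + j.1, by omega⟩

/-- The inclusion `k[x_{r+1},…,x_n] → k[x_1,…,x_n]` as a ring hom. -/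
noncomputable def tailIncl (k : Type*) [Field k] {n : ℕ} (r : ℕ) (h : r ≤ n) :
    MvPolynomial (Fin (n - r)) k →+* MvPolynomial (Fin n) k :=
  (rename (tailEmb n r h)).toRingHom

/-- `J₁ = (J ∩ k[x_1,…,x_r])S`: the ideal generated by the monomials of `J`
lying in `k[x_1,…,x_r]`. -/
noncomputable def Jone (r : ℕ) (J : Ideal (MvPolynomial (Fin n) k)) :
    Ideal (MvPolynomial (Fin n) k) :=
  Ideal.span {g | ∃ d : Fin n →₀ ℕ, (∀ i : Fin n, r ≤ (i : ℕ) → d i = 0) ∧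
    (monomial d (1:k) : MvPolynomial (Fin n) k) ∈ J ∧
    g = (monomial d (1:k) : MvPolynomial (Fin n) k)}

/-- The quotient module `J₂/J₁` for ideals `J₁ ≤ J₂`. -/
abbrev quotMod (J₁ J₂ : Ideal (MvPolynomial (Fin n) k)) :=
  (J₂ : Submodule (MvPolynomial (Fin n) k) (MvPolynomial (Fin n) k)) ⧸
    (Submodule.comap
      (J₂ : Submodule (MvPolynomial (Fin n) k) (MvPolynomial (Fin n) k)).subtype
      (J₁ : Submodule (MvPolynomial (Fin n) k) (MvPolynomial (Fin n) k)))

/-- `J₂/J₁` as a module over `k[x_{r+1},…,x_n]`. -/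
noncomputable def quotModTail (r : ℕ) (h : r ≤ n) (J₁ J₂ : Ideal (MvPolynomial (Fin n) k)) :
    Module (MvPolynomial (Fin (n - r)) k) (quotMod J₁ J₂) :=
  Module.compHom _ (tailIncl k r h)

/-- The degrevlex property of a monomial order: compare total degrees first, and break
ties by the *last* variable in which the exponents differ, where *larger* exponent
means *smaller* monomial. -/
def IsDegRevLex (m : MonomialOrder (Fin n)) : Prop :=
  ∀ a b : Fin n →₀ ℕ, (m.toSyn a < m.toSyn b) ↔
    ((a.sum fun _ e => e) < (b.sum fun _ e => e) ∨
      ((a.sum fun _ e => e) = (b.sum fun _ e => e) ∧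
        ∃ i : Fin n, b i < a i ∧ ∀ j : Fin n, i < j → a j = b j))

end Paper

namespace Paper

variable {k : Type*} [Field k] {n : ℕ}

/-- `g` is a grading of the module `M` over `k[x_1,…,x_n]` by `k`-subspaces,
compatible with the standard grading of the polynomial ring. -/
def IsGrading {M : Type*} [AddCommGroup M] [Module (MvPolynomial (Fin n) k) M]
    [Module k M] [IsScalarTower k (MvPolynomial (Fin n) k) M]
    (g : ℕ → Submodule k M) : Prop :=
  DirectSum.IsInternal g ∧
    ∀ (i j : ℕ) (s : MvPolynomial (Fin n) k), s.IsHomogeneous j →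
      ∀ x ∈ g i, s • x ∈ g (i + j)

/-- The Hilbert series of a graded module, given its grading. -/
noncomputable def hilbMod {M : Type*} [AddCommGroup M] [Module k M]
    (g : ℕ → Submodule k M) : PowerSeries ℤ :=
  PowerSeries.mk fun i => (Module.finrank k (g i) : ℤ)

/-- The Krull dimension of a module `M` over `k[x_1,…,x_n]`. -/
noncomputable def mdim (k : Type*) [Field k] {n : ℕ} (M : Type*) [AddCommGroup M]
    [Module (MvPolynomial (Fin n) k) M] : WithBot (WithTop ℕ) :=
  ringKrullDim (MvPolynomial (Fin n) k ⧸
    Module.annihilator (MvPolynomial (Fin n) k) M)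

end Paper

open Paper MvPolynomial


section Helpers
variable {k : Type*} [Field k] {n : ℕ}

lemma my_fd_homog (d : ℕ) :
    FiniteDimensional k (homogeneousSubmodule (Fin n) k d) := by
  apply Submodule.finiteDimensional_of_le (S₂ := restrictTotalDegree (Fin n) k d)
  intro p hp
  rw [mem_restrictTotalDegree]
  exact ((mem_homogeneousSubmodule _ _).mp hp).totalDegree_le

section comp
variable {R M' ι : Type*} [Ring R] [AddCommGroup M'] [Module R M'] [DecidableEq ι]
  {g : ι → Submodule R M'}

lemma my_decomp (hg : DirectSum.IsInternal g) (x : M') :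
    ∃ (s : Finset ι) (v : ι → M'), (∀ j ∈ s, v j ∈ g j) ∧ x = ∑ j ∈ s, v j := by
  classical
  set e := LinearEquiv.ofBijective (DirectSum.coeLinearMap g) hg with he
  refine ⟨(e.symm x).support, fun j => ((e.symm x) j : M'), fun j _ => ((e.symm x) j).2, ?_⟩
  conv_lhs => rw [← e.apply_symm_apply x]
  rw [he]
  show DirectSum.coeLinearMap g (e.symm x) = _
  rw [DirectSum.coeLinearMap_eq_dfinsuppSum]
  rfl

lemma my_comp_eq (hg : DirectSum.IsInternal g) {s : Finset ι} {v : ι → M'}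
    (hv : ∀ j ∈ s, v j ∈ g j) {i : ι} (hx : (∑ j ∈ s, v j) ∈ g i) :
    (∑ j ∈ s, v j) = if i ∈ s then v i else 0 := by
  classical
  set e := LinearEquiv.ofBijective (DirectSum.coeLinearMap g) hg with he
  have h1 : ((e.symm (∑ j ∈ s, v j)) i : M') = ∑ j ∈ s, v j := by
    rw [hg.ofBijective_coeLinearMap_of_mem hx]
  have h2 : e.symm (∑ j ∈ s, v j) = ∑ j ∈ s, e.symm (v j) := map_sum _ _ _
  have h3 : ∀ j ∈ s, ((e.symm (v j)) i : M') = if j = i then v j else 0 := by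
    intro j hj
    by_cases hji : j = i
    · subst hji
      rw [hg.ofBijective_coeLinearMap_of_mem (hv j hj), if_pos rfl]
    · rw [hg.ofBijective_coeLinearMap_of_mem_ne hji (hv j hj), if_neg hji]
      rfl
  rw [← h1, h2, DFinsupp.finset_sum_apply]
  rw [AddSubmonoidClass.coe_finset_sum]
  rw [Finset.sum_congr rfl h3, Finset.sum_ite_eq' s i v]

end comp

lemma my_map_finset_sup {R M N : Type*} [Semiring R] [AddCommMonoid M] [AddCommMonoid N]
    [Module R M] [Module R N] (f : M →ₗ[R] N) {α : Type*} (t : Finset α)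
    (Qf : α → Submodule R M) :
    Submodule.map f (t.sup Qf) = t.sup fun a => Submodule.map f (Qf a) :=
  Finset.comp_sup_eq_sup_comp _ (fun a b => Submodule.map_sup _ _ _) (Submodule.map_bot f)

lemma my_fd_pieces {M : Type*} [AddCommGroup M] [Module (MvPolynomial (Fin n) k) M]
    [Module k M] [IsScalarTower k (MvPolynomial (Fin n) k) M]
    [Module.Finite (MvPolynomial (Fin n) k) M]
    {g : ℕ → Submodule k M} (hg : Paper.IsGrading (k := k) (n := n) g) (i : ℕ) :
    FiniteDimensional k (g i) := by
  classical
  obtain ⟨T, hT⟩ := Module.Finite.fg_top (R := MvPolynomial (Fin n) k) (M := M)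
  choose s v hv hsum using my_decomp hg.1
  let σ : M → MvPolynomial (Fin n) k →ₗ[k] M := fun y =>
    (LinearMap.toSpanSingleton (MvPolynomial (Fin n) k) M y).restrictScalars k
  let Q : ℕ → Submodule k M := fun i' => T.sup fun x =>
    ((s x).filter (fun j => j ≤ i')).sup fun j =>
      (homogeneousSubmodule (Fin n) k (i' - j)).map (σ (v x j))
  haveI hfd : ∀ i', FiniteDimensional k (Q i') := by
    intro i'
    haveI := fun d => my_fd_homog (k := k) (n := n) d
    infer_instance
  have hQle : ∀ i', Q i' ≤ g i' := by
    intro i'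
    apply Finset.sup_le; intro x hx
    apply Finset.sup_le; intro j hj
    rw [Finset.mem_filter] at hj
    rintro y ⟨p, hp, rfl⟩
    have h := hg.2 j (i' - j) p ((mem_homogeneousSubmodule _ _).mp hp) (v x j) (hv x j hj.1)
    rw [Nat.add_sub_cancel' hj.2] at h
    exact h
  have hsmul : ∀ (d : ℕ) (p : MvPolynomial (Fin n) k), p.IsHomogeneous d → ∀ i',
      Submodule.map ((LinearMap.lsmul (MvPolynomial (Fin n) k) M p).restrictScalars k) (Q i')
        ≤ Q (i' + d) := by
    intro d p hpd i'
    simp only [Q]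
    rw [my_map_finset_sup]
    apply Finset.sup_le; intro x hx
    rw [my_map_finset_sup]
    apply Finset.sup_le; intro j hj
    rw [Finset.mem_filter] at hj
    rw [← Submodule.map_comp]
    have hcomp : (((LinearMap.lsmul (MvPolynomial (Fin n) k) M p).restrictScalars k).comp
        (σ (v x j))) = (σ (v x j)).comp (LinearMap.mulLeft k p) := by
      refine LinearMap.ext fun q => ?_
      show p • (q • v x j) = (p * q) • v x j
      rw [mul_smul]
    rw [hcomp, Submodule.map_comp]
    have himg : Submodule.map (LinearMap.mulLeft k p)
        (homogeneousSubmodule (Fin n) k (i' - j)) ≤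
        homogeneousSubmodule (Fin n) k ((i' + d) - j) := by
      rintro q ⟨q', hq', rfl⟩
      rw [mem_homogeneousSubmodule]
      have := hpd.mul ((mem_homogeneousSubmodule _ _).mp hq')
      have harith : d + (i' - j) = (i' + d) - j := by omega
      rw [harith] at this
      exact this
    refine le_trans (Submodule.map_mono himg) ?_
    have hjmem : j ∈ (s x).filter (fun j' => j' ≤ i' + d) :=
      Finset.mem_filter.mpr ⟨hj.1, by omega⟩
    have h2 : Submodule.map (σ (v x j)) (homogeneousSubmodule (Fin n) k (i' + d - j)) ≤
        ((s x).filter (fun j' => j' ≤ i' + d)).sup (fun j' =>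
          Submodule.map (σ (v x j')) (homogeneousSubmodule (Fin n) k (i' + d - j'))) :=
      Finset.le_sup (f := fun j' =>
        Submodule.map (σ (v x j')) (homogeneousSubmodule (Fin n) k (i' + d - j'))) hjmem
    have h3 : ((s x).filter (fun j' => j' ≤ i' + d)).sup (fun j' =>
          Submodule.map (σ (v x j')) (homogeneousSubmodule (Fin n) k (i' + d - j'))) ≤
        T.sup fun x => ((s x).filter (fun j' => j' ≤ i' + d)).sup fun j' =>
          Submodule.map (σ (v x j')) (homogeneousSubmodule (Fin n) k (i' + d - j')) :=
      Finset.le_sup (f := fun x => ((s x).filter (fun j' => j' ≤ i' + d)).sup fun j' =>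
        Submodule.map (σ (v x j')) (homogeneousSubmodule (Fin n) k (i' + d - j'))) hx
    exact le_trans h2 h3
  have hQU : ∀ i', Q i' ≤ ⨆ i'', Q i'' := fun i' => le_iSup Q i'
  have hsmulU : ∀ (p : MvPolynomial (Fin n) k) (u : M), u ∈ (⨆ i', Q i') →
      p • u ∈ ⨆ i', Q i' := by
    intro p u hu
    refine Submodule.iSup_induction (motive := fun z => p • z ∈ ⨆ i', Q i') Q hu ?_ ?_ ?_
    · intro i' u hu'
      have hdecomp : p = ∑ d ∈ Finset.range (p.totalDegree + 1),
          homogeneousComponent d p := (sum_homogeneousComponent p).symm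
      rw [hdecomp, Finset.sum_smul]
      apply Submodule.sum_mem
      intro d _
      refine hQU (i' + d) ?_
      refine hsmul d _ (homogeneousComponent_isHomogeneous d p) i' ?_
      exact ⟨u, hu', rfl⟩
    · simp
    · intro a b ha hb
      rw [smul_add]
      exact Submodule.add_mem _ ha hb
  have hU : ∀ y : M, y ∈ ⨆ i', Q i' := by
    intro y
    have hy : y ∈ Submodule.span (MvPolynomial (Fin n) k) (T : Set M) := by
      rw [hT]; trivial
    refine Submodule.span_induction ?_ ?_ ?_ ?_ hy
    · intro t ht
      rw [hsum t]
      apply Submodule.sum_mem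
      intro j hj
      refine hQU j ?_
      have h1 : v t j ∈ (homogeneousSubmodule (Fin n) k (j - j)).map (σ (v t j)) := by
        refine ⟨1, ?_, one_smul _ _⟩
        rw [Nat.sub_self]
        exact (mem_homogeneousSubmodule _ _).mpr (isHomogeneous_one _ _)
      have hjmem : j ∈ (s t).filter (fun j' => j' ≤ j) :=
        Finset.mem_filter.mpr ⟨hj, le_refl j⟩
      have h2 : (homogeneousSubmodule (Fin n) k (j - j)).map (σ (v t j)) ≤
          ((s t).filter (fun j' => j' ≤ j)).sup (fun j' =>
            (homogeneousSubmodule (Fin n) k (j - j')).map (σ (v t j'))) :=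
        Finset.le_sup (f := fun j' =>
          (homogeneousSubmodule (Fin n) k (j - j')).map (σ (v t j'))) hjmem
      have h3 : ((s t).filter (fun j' => j' ≤ j)).sup (fun j' =>
            (homogeneousSubmodule (Fin n) k (j - j')).map (σ (v t j'))) ≤ Q j :=
        Finset.le_sup (f := fun x => ((s x).filter (fun j' => j' ≤ j)).sup fun j' =>
          (homogeneousSubmodule (Fin n) k (j - j')).map (σ (v x j'))) ht
      exact h3 (h2 h1)
    · exact Submodule.zero_mem _
    · intro a b _ _ ha hb; exact Submodule.add_mem _ ha hb
    · intro p a _ ha; exact hsmulU p a ha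
  have hgQ : g i ≤ Q i := by
    intro y hy
    have := hU y
    rw [Submodule.mem_iSup_iff_exists_finsupp] at this
    obtain ⟨f, hf, hfsum⟩ := this
    have hysum : y = ∑ j ∈ f.support, f j := by
      rw [← hfsum]; rfl
    have hcomp := my_comp_eq hg.1 (s := f.support) (v := fun j => f j)
      (fun j _ => hQle j (hf j)) (i := i) (by rw [← hysum]; exact hy)
    rw [hysum, hcomp]
    split
    · exact hf i
    · exact Submodule.zero_mem _
  exact Submodule.finiteDimensional_of_le hgQ

section balance
variable {M₁ N M M₂ : Type*}
    [AddCommGroup M₁] [Module (MvPolynomial (Fin n) k) M₁]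
    [Module k M₁] [IsScalarTower k (MvPolynomial (Fin n) k) M₁] [Module.Finite (MvPolynomial (Fin n) k) M₁]
    [AddCommGroup N] [Module (MvPolynomial (Fin n) k) N]
    [Module k N] [IsScalarTower k (MvPolynomial (Fin n) k) N] [Module.Finite (MvPolynomial (Fin n) k) N]
    [AddCommGroup M] [Module (MvPolynomial (Fin n) k) M]
    [Module k M] [IsScalarTower k (MvPolynomial (Fin n) k) M] [Module.Finite (MvPolynomial (Fin n) k) M]
    [AddCommGroup M₂] [Module (MvPolynomial (Fin n) k) M₂]
    [Module k M₂] [IsScalarTower k (MvPolynomial (Fin n) k) M₂] [Module.Finite (MvPolynomial (Fin n) k) M₂]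

open Module

lemma my_balance
    (g₁ : ℕ → Submodule k M₁) (gN : ℕ → Submodule k N)
    (gM : ℕ → Submodule k M) (g₂ : ℕ → Submodule k M₂)
    (hg₁ : Paper.IsGrading (k := k) (n := n) g₁) (hgN : Paper.IsGrading (k := k) (n := n) gN)
    (hgM : Paper.IsGrading (k := k) (n := n) gM) (hg₂ : Paper.IsGrading (k := k) (n := n) g₂)
    (f₁ : M₁ →ₗ[MvPolynomial (Fin n) k] N) (f₂ : N →ₗ[MvPolynomial (Fin n) k] M)
    (f₃ : M →ₗ[MvPolynomial (Fin n) k] M₂)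
    (hdeg₁ : ∀ i : ℕ, ∀ x ∈ g₁ i, f₁ x ∈ gN i)
    (hdeg₂ : ∀ i : ℕ, ∀ x ∈ gN i, f₂ x ∈ gM i)
    (hdeg₃ : ∀ i : ℕ, ∀ x ∈ gM i, f₃ x ∈ g₂ i)
    (hinj : Function.Injective f₁) (hex₁ : Function.Exact f₁ f₂)
    (hex₂ : Function.Exact f₂ f₃) (hsurj : Function.Surjective f₃) (i : ℕ) :
    finrank k (gN i) + finrank k (g₂ i) = finrank k (gM i) + finrank k (g₁ i) := by
  classical
  haveI := my_fd_pieces hgN i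
  haveI := my_fd_pieces hgM i
  let F₁ : g₁ i →ₗ[k] gN i := (f₁.restrictScalars k).restrict (hdeg₁ i)
  let F₂ : gN i →ₗ[k] gM i := (f₂.restrictScalars k).restrict (hdeg₂ i)
  let F₃ : gM i →ₗ[k] g₂ i := (f₃.restrictScalars k).restrict (hdeg₃ i)
  have hinjF₁ : Function.Injective F₁ := by
    intro a b hab
    have : f₁ (a : M₁) = f₁ (b : M₁) := congrArg Subtype.val hab
    exact Subtype.ext (hinj this)
  have hker₂ : LinearMap.ker F₂ = LinearMap.range F₁ := by
    apply le_antisymm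
    · intro x hx
      have hx0 : f₂ (x : N) = 0 := congrArg Subtype.val (LinearMap.mem_ker.mp hx)
      obtain ⟨y, hy⟩ := (hex₁ _).mp hx0
      obtain ⟨s, v, hv, hsumy⟩ := my_decomp hg₁.1 y
      have hxsum : ((x : N)) = ∑ j ∈ s, f₁ (v j) := by rw [← map_sum, ← hsumy, hy]
      have hmem : ∀ j ∈ s, f₁ (v j) ∈ gN j := fun j hj => hdeg₁ j _ (hv j hj)
      have hval : (x : N) = if i ∈ s then f₁ (v i) else 0 := by
        rw [hxsum]
        exact my_comp_eq hgN.1 hmem (by rw [← hxsum]; exact x.2)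
      by_cases his : i ∈ s
      · exact ⟨⟨v i, hv i his⟩, Subtype.ext (by rw [hval, if_pos his]; rfl)⟩
      · exact ⟨0, Subtype.ext (by rw [hval, if_neg his]; simp [F₁])⟩
    · rintro x ⟨y, rfl⟩
      apply LinearMap.mem_ker.mpr
      apply Subtype.ext
      show f₂ (f₁ (y : M₁)) = 0
      exact (hex₁ _).mpr ⟨_, rfl⟩
  have hker₃ : LinearMap.ker F₃ = LinearMap.range F₂ := by
    apply le_antisymm
    · intro x hx
      have hx0 : f₃ (x : M) = 0 := congrArg Subtype.val (LinearMap.mem_ker.mp hx)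
      obtain ⟨y, hy⟩ := (hex₂ _).mp hx0
      obtain ⟨s, v, hv, hsumy⟩ := my_decomp hgN.1 y
      have hxsum : ((x : M)) = ∑ j ∈ s, f₂ (v j) := by rw [← map_sum, ← hsumy, hy]
      have hmem : ∀ j ∈ s, f₂ (v j) ∈ gM j := fun j hj => hdeg₂ j _ (hv j hj)
      have hval : (x : M) = if i ∈ s then f₂ (v i) else 0 := by
        rw [hxsum]
        exact my_comp_eq hgM.1 hmem (by rw [← hxsum]; exact x.2)
      by_cases his : i ∈ s
      · exact ⟨⟨v i, hv i his⟩, Subtype.ext (by rw [hval, if_pos his]; rfl)⟩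
      · exact ⟨0, Subtype.ext (by rw [hval, if_neg his]; simp [F₂])⟩
    · rintro x ⟨y, rfl⟩
      apply LinearMap.mem_ker.mpr
      apply Subtype.ext
      show f₃ (f₂ (y : N)) = 0
      exact (hex₂ _).mpr ⟨_, rfl⟩
  have hrange₃ : LinearMap.range F₃ = ⊤ := by
    rw [eq_top_iff]
    intro z _
    obtain ⟨w, hw⟩ := hsurj (z : M₂)
    obtain ⟨s, v, hv, hsumw⟩ := my_decomp hgM.1 w
    have hzsum : ((z : M₂)) = ∑ j ∈ s, f₃ (v j) := by rw [← map_sum, ← hsumw, hw]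
    have hmem : ∀ j ∈ s, f₃ (v j) ∈ g₂ j := fun j hj => hdeg₃ j _ (hv j hj)
    have hval : (z : M₂) = if i ∈ s then f₃ (v i) else 0 := by
      rw [hzsum]
      exact my_comp_eq hg₂.1 hmem (by rw [← hzsum]; exact z.2)
    by_cases his : i ∈ s
    · exact ⟨⟨v i, hv i his⟩, Subtype.ext (by rw [hval, if_pos his]; rfl)⟩
    · exact ⟨0, Subtype.ext (by rw [hval, if_neg his]; simp [F₃])⟩
  have e1 : finrank k (LinearMap.range F₂) + finrank k (LinearMap.ker F₂) = finrank k (gN i) :=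
    LinearMap.finrank_range_add_finrank_ker F₂
  have e2 : finrank k (LinearMap.ker F₂) = finrank k (g₁ i) := by
    rw [hker₂, LinearMap.finrank_range_of_inj hinjF₁]
  have e3 : finrank k (LinearMap.range F₃) + finrank k (LinearMap.ker F₃) = finrank k (gM i) :=
    LinearMap.finrank_range_add_finrank_ker F₃
  have e4 : finrank k (LinearMap.range F₃) = finrank k (g₂ i) := by
    rw [hrange₃]; exact finrank_top k _
  have e5 : finrank k (LinearMap.ker F₃) = finrank k (LinearMap.range F₂) := by rw [hker₃]
  omega

end balance

lemma my_key (q : Polynomial ℤ) (d D m : ℕ) (hdD : d ≤ D) (hDm : D ≤ m) :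
    (Polynomial.taylor 1 (q * (1 - Polynomial.X) ^ (m - d))).coeff (m - D) =
      (-1 : ℤ) ^ (m - D) * (if D = d then q.eval 1 else 0) := by
  have hpow : Polynomial.taylor (1:ℤ) ((1 - Polynomial.X) ^ (m - d)) =
      (Polynomial.taylor (1:ℤ) (1 - Polynomial.X)) ^ (m - d) :=
    map_pow (Polynomial.taylorAlgHom (1:ℤ)) _ _
  have hbase : Polynomial.taylor (1:ℤ) (1 - Polynomial.X) = -Polynomial.X := by
    rw [map_sub, Polynomial.taylor_one, Polynomial.taylor_X]
    simp only [Polynomial.C_1]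
    ring
  have ht : Polynomial.taylor (1:ℤ) (q * (1 - Polynomial.X) ^ (m - d)) =
      Polynomial.C ((-1:ℤ)^(m-d)) * (Polynomial.taylor 1 q * Polynomial.X ^ (m - d)) := by
    rw [Polynomial.taylor_mul, hpow, hbase, neg_pow]
    rw [show ((-1 : Polynomial ℤ) = Polynomial.C (-1:ℤ)) by simp, ← Polynomial.C_pow]
    ring
  rw [ht, Polynomial.coeff_C_mul, Polynomial.coeff_mul_X_pow']
  by_cases hD : D = d
  · subst hD
    rw [if_pos le_rfl, if_pos rfl, Nat.sub_self, Polynomial.taylor_coeff_zero]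
  · have hlt : ¬ (m - d ≤ m - D) := by omega
    rw [if_neg hlt, if_neg hD, mul_zero, mul_zero]

lemma my_dim_mono {R : Type*} [CommRing R] {I J : Ideal R} (h : I ≤ J) :
    ringKrullDim (R ⧸ J) ≤ ringKrullDim (R ⧸ I) :=
  ringKrullDim_le_of_surjective (Ideal.Quotient.factor h) (by
    intro y
    obtain ⟨x, rfl⟩ := Ideal.Quotient.mk_surjective y
    exact ⟨Ideal.Quotient.mk I x, rfl⟩)


end Helpers

/-- In the setting of the four-term exact sequence, at `i = m - D`
one has `e_i(N) = e_i(M) + (-1)^i·[D = d₁]·e₀(M₁) − (-1)^i·[D = d₂]·e₀(M₂)`. -/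
theorem stmt8
    {k : Type*} [Field k] {n : ℕ}
    {M₁ N M M₂ : Type*}
    [AddCommGroup M₁] [Module (MvPolynomial (Fin n) k) M₁]
    [Module k M₁] [IsScalarTower k (MvPolynomial (Fin n) k) M₁] [Module.Finite (MvPolynomial (Fin n) k) M₁]
    [AddCommGroup N] [Module (MvPolynomial (Fin n) k) N]
    [Module k N] [IsScalarTower k (MvPolynomial (Fin n) k) N] [Module.Finite (MvPolynomial (Fin n) k) N]
    [AddCommGroup M] [Module (MvPolynomial (Fin n) k) M]
    [Module k M] [IsScalarTower k (MvPolynomial (Fin n) k) M] [Module.Finite (MvPolynomial (Fin n) k) M]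
    [AddCommGroup M₂] [Module (MvPolynomial (Fin n) k) M₂]
    [Module k M₂] [IsScalarTower k (MvPolynomial (Fin n) k) M₂] [Module.Finite (MvPolynomial (Fin n) k) M₂]
    (g₁ : ℕ → Submodule k M₁) (gN : ℕ → Submodule k N)
    (gM : ℕ → Submodule k M) (g₂ : ℕ → Submodule k M₂)
    (hg₁ : IsGrading (n := n) g₁) (hgN : IsGrading (n := n) gN) (hgM : IsGrading (n := n) gM) (hg₂ : IsGrading (n := n) g₂)
    (f₁ : M₁ →ₗ[MvPolynomial (Fin n) k] N) (f₂ : N →ₗ[MvPolynomial (Fin n) k] M)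
    (f₃ : M →ₗ[MvPolynomial (Fin n) k] M₂)
    (hdeg₁ : ∀ i : ℕ, ∀ x ∈ g₁ i, f₁ x ∈ gN i)
    (hdeg₂ : ∀ i : ℕ, ∀ x ∈ gN i, f₂ x ∈ gM i)
    (hdeg₃ : ∀ i : ℕ, ∀ x ∈ gM i, f₃ x ∈ g₂ i)
    (hinj : Function.Injective f₁) (hex₁ : Function.Exact f₁ f₂)
    (hex₂ : Function.Exact f₂ f₃) (hsurj : Function.Surjective f₃)
    (m d₁ d₂ : ℕ)
    (hdimN : mdim (n := n) k N = (m : WithBot (WithTop ℕ)))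
    (hdimM : mdim (n := n) k M = (m : WithBot (WithTop ℕ)))
    (hdim₁ : mdim (n := n) k M₁ = (d₁ : WithBot (WithTop ℕ)))
    (hdim₂ : mdim (n := n) k M₂ = (d₂ : WithBot (WithTop ℕ)))
    (qN qM q₁ q₂ : Polynomial ℤ)
    (hqN : hilbMod gN * (1 - PowerSeries.X) ^ m = (qN : PowerSeries ℤ))
    (hqN1 : qN.eval 1 ≠ 0)
    (hqM : hilbMod gM * (1 - PowerSeries.X) ^ m = (qM : PowerSeries ℤ))
    (hqM1 : qM.eval 1 ≠ 0)
    (hq₁ : hilbMod g₁ * (1 - PowerSeries.X) ^ d₁ = (q₁ : PowerSeries ℤ))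
    (hq₁1 : q₁.eval 1 ≠ 0)
    (hq₂ : hilbMod g₂ * (1 - PowerSeries.X) ^ d₂ = (q₂ : PowerSeries ℤ))
    (hq₂1 : q₂.eval 1 ≠ 0) :
    hc qN (m - max d₁ d₂) =
      hc qM (m - max d₁ d₂)
        + (-1 : ℤ) ^ (m - max d₁ d₂) * (if max d₁ d₂ = d₁ then q₁.eval 1 else 0)
        - (-1 : ℤ) ^ (m - max d₁ d₂) * (if max d₁ d₂ = d₂ then q₂.eval 1 else 0) := by
  classical
  -- dimensions
  have hannN1 : Module.annihilator (MvPolynomial (Fin n) k) N ≤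
      Module.annihilator (MvPolynomial (Fin n) k) M₁ := by
    intro a ha
    rw [Module.mem_annihilator] at ha ⊢
    intro x
    apply hinj
    rw [map_smul, ha, map_zero]
  have hannM2 : Module.annihilator (MvPolynomial (Fin n) k) M ≤
      Module.annihilator (MvPolynomial (Fin n) k) M₂ := by
    intro a ha
    rw [Module.mem_annihilator] at ha ⊢
    intro z
    obtain ⟨w, rfl⟩ := hsurj z
    rw [← map_smul, ha w, map_zero]
  have hd1 : d₁ ≤ m := by
    have h2 : mdim (n := n) k M₁ ≤ mdim (n := n) k N := my_dim_mono hannN1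
    rw [hdim₁, hdimN] at h2
    exact_mod_cast h2
  have hd2 : d₂ ≤ m := by
    have h2 : mdim (n := n) k M₂ ≤ mdim (n := n) k M := my_dim_mono hannM2
    rw [hdim₂, hdimM] at h2
    exact_mod_cast h2
  -- Hilbert series identity
  have hser : hilbMod gN + hilbMod g₂ = hilbMod gM + hilbMod g₁ := by
    apply PowerSeries.ext
    intro i
    have hb := my_balance g₁ gN gM g₂ hg₁ hgN hgM hg₂ f₁ f₂ f₃ hdeg₁ hdeg₂ hdeg₃
      hinj hex₁ hex₂ hsurj i
    simp only [map_add, hilbMod, PowerSeries.coeff_mk]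
    exact_mod_cast hb
  -- coe facts
  have hcoe : ((1 - Polynomial.X : Polynomial ℤ) : PowerSeries ℤ) = 1 - PowerSeries.X := by
    rw [← Polynomial.coeToPowerSeries.ringHom_apply, map_sub, map_one,
      Polynomial.coeToPowerSeries.ringHom_apply, Polynomial.coe_X]
  have hcast : ∀ (q : Polynomial ℤ) (e : ℕ),
      ((q * (1 - Polynomial.X) ^ e : Polynomial ℤ) : PowerSeries ℤ) =
        (q : PowerSeries ℤ) * (1 - PowerSeries.X) ^ e := by
    intro q e
    rw [Polynomial.coe_mul, Polynomial.coe_pow, hcoe]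
  have hps : ((qN + q₂ * (1 - Polynomial.X) ^ (m - d₂) : Polynomial ℤ) : PowerSeries ℤ) =
      ((qM + q₁ * (1 - Polynomial.X) ^ (m - d₁) : Polynomial ℤ) : PowerSeries ℤ) := by
    rw [Polynomial.coe_add, Polynomial.coe_add, hcast, hcast, ← hqN, ← hqM, ← hq₁, ← hq₂]
    rw [mul_assoc, mul_assoc, ← pow_add, ← pow_add,
      Nat.add_sub_cancel' hd2, Nat.add_sub_cancel' hd1]
    rw [← add_mul, ← add_mul, hser]
  have hpoly : qN + q₂ * (1 - Polynomial.X) ^ (m - d₂) =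
      qM + q₁ * (1 - Polynomial.X) ^ (m - d₁) := Polynomial.coe_inj.mp hps
  -- take Taylor coefficients
  have hkey₁ := my_key q₁ d₁ (max d₁ d₂) m (le_max_left _ _) (by omega)
  have hkey₂ := my_key q₂ d₂ (max d₁ d₂) m (le_max_right _ _) (by omega)
  have happ := congrArg (fun p => (Polynomial.taylor (1:ℤ) p).coeff (m - max d₁ d₂)) hpoly
  simp only [map_add, Polynomial.coeff_add] at happ
  rw [hkey₁, hkey₂] at happ
  simp only [hc]
  linarith [happ]
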